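/- For d = 2, the space SC_2(0,2;o) of two nonoverlapping semidiscs in the closed upper unit semidisc has exactly two path-connected components, namely {((x,r),(y,s)) ∈ SC_2(0,2;o) : x_1 < y_1} and {((x,r),(y,s)) ∈ SC_2(0,2;o) : x_1 > y_1}; each of these two components is path-connected (indeed convex as a subset of (ℝ² × ℝ)²), their union is all of SC_2(0,2;o), and the swap map τ exchanges them. -/

import Mathlib

noncomputable section

/-- The configuration space `SC_2(0,2;o)` of two nonoverlapping semidiscs in the closed
upper unit semidisc of `ℝ²`. -/
def SC02dim2 : Set ((EuclideanSpace ℝ (Fin 2) × ℝ) × (EuclideanSpace ℝ (Fin 2) × ℝ)) :=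
  {c | 0 < c.1.2 ∧ 0 < c.2.2 ∧
       c.1.1 (1 : Fin 2) = 0 ∧ c.2.1 (1 : Fin 2) = 0 ∧
       ‖c.1.1‖ + c.1.2 ≤ 1 ∧ ‖c.2.1‖ + c.2.2 ≤ 1 ∧
       ‖c.1.1 - c.2.1‖ ≥ c.1.2 + c.2.2}

/-- The part of `SC_2(0,2;o)` where the first semidisc lies to the left of the second
one, i.e. `x_1 < y_1`. -/
def leftPart : Set ((EuclideanSpace ℝ (Fin 2) × ℝ) × (EuclideanSpace ℝ (Fin 2) × ℝ)) :=
  {c ∈ SC02dim2 | c.1.1 (0 : Fin 2) < c.2.1 (0 : Fin 2)}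

/-- The part of `SC_2(0,2;o)` where the first semidisc lies to the right of the second
one, i.e. `x_1 > y_1`. -/
def rightPart : Set ((EuclideanSpace ℝ (Fin 2) × ℝ) × (EuclideanSpace ℝ (Fin 2) × ℝ)) :=
  {c ∈ SC02dim2 | c.2.1 (0 : Fin 2) < c.1.1 (0 : Fin 2)}

lemma norm_eq_abs' (v : EuclideanSpace ℝ (Fin 2)) (h : v 1 = 0) : ‖v‖ = |v 0| := by
  rw [EuclideanSpace.norm_eq]
  simp [Fin.sum_univ_two, h, Real.sqrt_sq_eq_abs]

lemma norm_sub_eq (x y : EuclideanSpace ℝ (Fin 2)) (hx : x 1 = 0) (hy : y 1 = 0) :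
    ‖x - y‖ = |x 0 - y 0| := by
  rw [norm_eq_abs' (x - y) (by simp [hx, hy])]; simp

lemma cpos {a b r r' : ℝ} (ha : 0 ≤ a) (hb : 0 ≤ b) (hab : a + b = 1)
    (hr : 0 < r) (hr' : 0 < r') : 0 < a * r + b * r' := by
  rcases eq_or_lt_of_le ha with h | h
  · rw [← h] at hab ⊢; nlinarith
  · nlinarith [mul_nonneg hb hr'.le]

lemma leftPart_convex : Convex ℝ leftPart := by
  rintro ⟨⟨x, r⟩, y, s⟩ ⟨⟨hr, hs, hx2, hy2, hx, hy, hsep⟩, hlt⟩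
    ⟨⟨x', r'⟩, y', s'⟩ ⟨⟨hr', hs', hx2', hy2', hx', hy', hsep'⟩, hlt'⟩ a b ha hb hab
  dsimp only at hr hs hx2 hy2 hx hy hsep hlt hr' hs' hx2' hy2' hx' hy' hsep' hlt'
  have h1 : y 0 - x 0 ≥ r + s := by
    rw [norm_sub_eq x y hx2 hy2, abs_sub_comm, abs_of_pos (by linarith)] at hsep; linarith
  have h1' : y' 0 - x' 0 ≥ r' + s' := by
    rw [norm_sub_eq x' y' hx2' hy2', abs_sub_comm, abs_of_pos (by linarith)] at hsep'; linarith
  have hX2 : (a • x + b • x') 1 = 0 := by simp [hx2, hx2']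
  have hY2 : (a • y + b • y') 1 = 0 := by simp [hy2, hy2']
  have hXlt : (a • x + b • x') 0 < (a • y + b • y') 0 := by
    have := cpos ha hb hab (sub_pos.2 hlt) (sub_pos.2 hlt')
    simp only [PiLp.add_apply, PiLp.smul_apply, smul_eq_mul]
    linarith [mul_sub a (y 0) (x 0), mul_sub b (y' 0) (x' 0)]
  have key : ‖(a • x + b • x') - (a • y + b • y')‖
      = (a • y + b • y') 0 - (a • x + b • x') 0 := by
    rw [norm_sub_eq _ _ hX2 hY2, abs_sub_comm, abs_of_pos (by linarith)]
  have hnx : ‖a • x + b • x'‖ ≤ a * ‖x‖ + b * ‖x'‖ := by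
    calc ‖a • x + b • x'‖ ≤ ‖a • x‖ + ‖b • x'‖ := norm_add_le _ _
      _ = a * ‖x‖ + b * ‖x'‖ := by
        rw [norm_smul, norm_smul, Real.norm_of_nonneg ha, Real.norm_of_nonneg hb]
  have hny : ‖a • y + b • y'‖ ≤ a * ‖y‖ + b * ‖y'‖ := by
    calc ‖a • y + b • y'‖ ≤ ‖a • y‖ + ‖b • y'‖ := norm_add_le _ _
      _ = a * ‖y‖ + b * ‖y'‖ := by
        rw [norm_smul, norm_smul, Real.norm_of_nonneg ha, Real.norm_of_nonneg hb]
  refine ⟨⟨?_, ?_, ?_, ?_, ?_, ?_, ?_⟩, ?_⟩ <;>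
    simp only [Prod.smul_fst, Prod.smul_snd, Prod.fst_add, Prod.snd_add, smul_eq_mul]
  · exact cpos ha hb hab hr hr'
  · exact cpos ha hb hab hs hs'
  · exact hX2
  · exact hY2
  · linarith [mul_le_mul_of_nonneg_left hx ha, mul_le_mul_of_nonneg_left hx' hb,
      mul_add a (‖x‖) r, mul_add b (‖x'‖) r', mul_one a, mul_one b, hnx]
  · linarith [mul_le_mul_of_nonneg_left hy ha, mul_le_mul_of_nonneg_left hy' hb,
      mul_add a (‖y‖) s, mul_add b (‖y'‖) s', mul_one a, mul_one b, hny]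
  · rw [ge_iff_le, key]
    simp only [PiLp.add_apply, PiLp.smul_apply, smul_eq_mul]
    linarith [mul_le_mul_of_nonneg_left h1 ha, mul_le_mul_of_nonneg_left h1' hb,
      mul_add a r s, mul_add b r' s', mul_sub a (y 0) (x 0), mul_sub b (y' 0) (x' 0)]
  · exact hXlt

lemma swap_mem (c : (EuclideanSpace ℝ (Fin 2) × ℝ) × (EuclideanSpace ℝ (Fin 2) × ℝ)) :
    Prod.swap c ∈ SC02dim2 ↔ c ∈ SC02dim2 := by
  obtain ⟨⟨x, r⟩, y, s⟩ := c
  simp only [SC02dim2, Set.mem_setOf_eq, Prod.swap]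
  constructor <;> rintro ⟨h1, h2, h3, h4, h5, h6, h7⟩ <;>
    exact ⟨h2, h1, h4, h3, h6, h5, by rw [norm_sub_rev]; linarith⟩

lemma swap_left : Prod.swap '' leftPart = rightPart := by
  rw [Set.image_swap_eq_preimage_swap]
  ext c
  simp only [Set.mem_preimage, leftPart, rightPart, Set.mem_setOf_eq, swap_mem]
  rfl

lemma swap_right : Prod.swap '' rightPart = leftPart := by
  rw [Set.image_swap_eq_preimage_swap]
  ext c
  simp only [Set.mem_preimage, leftPart, rightPart, Set.mem_setOf_eq, swap_mem]
  rfl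

lemma rightPart_convex : Convex ℝ rightPart := by
  rw [← swap_left]
  exact leftPart_convex.linear_image (LinearEquiv.prodComm ℝ _ _).toLinearMap

def pt : (EuclideanSpace ℝ (Fin 2) × ℝ) × (EuclideanSpace ℝ (Fin 2) × ℝ) :=
  (((WithLp.toLp 2 ![(-1 : ℝ)/2, 0] : EuclideanSpace ℝ (Fin 2)), 1/4),
   ((WithLp.toLp 2 ![(1 : ℝ)/2, 0] : EuclideanSpace ℝ (Fin 2)), 1/4))

lemma pt_mem : pt ∈ leftPart := by
  have e1 : pt.1.1 1 = 0 := rfl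
  have e2 : pt.2.1 1 = 0 := rfl
  have n1 : ‖pt.1.1‖ = 1/2 := by
    rw [norm_eq_abs' _ e1]
    show |(-1 : ℝ)/2| = 1/2
    rw [abs_of_nonpos (by norm_num)]; norm_num
  have n2 : ‖pt.2.1‖ = 1/2 := by
    rw [norm_eq_abs' _ e2]
    show |(1 : ℝ)/2| = 1/2
    rw [abs_of_nonneg (by norm_num)]
  have n3 : ‖pt.1.1 - pt.2.1‖ = 1 := by
    rw [norm_sub_eq _ _ e1 e2]
    show |(-1 : ℝ)/2 - 1/2| = 1
    rw [abs_of_nonpos (by norm_num)]; norm_num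
  refine ⟨⟨?_, ?_, e1, e2, ?_, ?_, ?_⟩, ?_⟩
  · show (0 : ℝ) < 1/4; norm_num
  · show (0 : ℝ) < 1/4; norm_num
  · rw [n1]; show (1 : ℝ)/2 + 1/4 ≤ 1; norm_num
  · rw [n2]; show (1 : ℝ)/2 + 1/4 ≤ 1; norm_num
  · rw [ge_iff_le, n3]; show (1 : ℝ)/4 + 1/4 ≤ 1; norm_num
  · show (-1 : ℝ)/2 < 1/2; norm_num

lemma left_ne : leftPart.Nonempty := ⟨pt, pt_mem⟩

lemma right_ne : rightPart.Nonempty := by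
  rw [← swap_left]; exact ⟨Prod.swap pt, pt, pt_mem, rfl⟩

lemma union_eq : leftPart ∪ rightPart = SC02dim2 := by
  ext c
  constructor
  · rintro (⟨h, _⟩ | ⟨h, _⟩) <;> exact h
  · intro hc
    obtain ⟨hr, hs, hx2, hy2, hx, hy, hsep⟩ := hc
    have h0 : c.1.1 0 ≠ c.2.1 0 := by
      intro h
      rw [norm_sub_eq _ _ hx2 hy2, h, sub_self, abs_zero] at hsep
      linarith
    rcases h0.lt_or_gt with h | h
    · exact Or.inl ⟨⟨hr, hs, hx2, hy2, hx, hy, hsep⟩, h⟩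
    · exact Or.inr ⟨⟨hr, hs, hx2, hy2, hx, hy, hsep⟩, h⟩

lemma inter_eq : leftPart ∩ rightPart = ∅ := by
  ext c
  simp only [Set.mem_inter_iff, Set.mem_empty_iff_false, iff_false]
  rintro ⟨⟨_, h1⟩, ⟨_, h2⟩⟩
  exact absurd h1 (asymm h2)

lemma not_path_conn : ¬ IsPathConnected SC02dim2 := by
  intro h
  have hq : Prod.swap pt ∈ rightPart := by
    rw [← swap_left]; exact ⟨pt, pt_mem, rfl⟩
  obtain ⟨γ, hγ⟩ := h.joinedIn pt pt_mem.1 (Prod.swap pt) hq.1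
  have hcont : Continuous
      (fun c : (EuclideanSpace ℝ (Fin 2) × ℝ) × (EuclideanSpace ℝ (Fin 2) × ℝ) =>
        c.2.1 0 - c.1.1 0) :=
    (((EuclideanSpace.proj (0 : Fin 2)).continuous.comp
        (continuous_fst.comp continuous_snd)).sub
      ((EuclideanSpace.proj (0 : Fin 2)).continuous.comp
        (continuous_fst.comp continuous_fst)))
  have hf : Continuous (fun t : unitInterval => (γ t).2.1 0 - (γ t).1.1 0) :=
    hcont.comp γ.continuous
  have hA : ((γ 0).2.1 0 - (γ 0).1.1 0 : ℝ) = 1 := by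
    rw [γ.source]; show (1 : ℝ)/2 - (-1)/2 = 1; norm_num
  have hB : ((γ 1).2.1 0 - (γ 1).1.1 0 : ℝ) = -1 := by
    rw [γ.target]; show (-1 : ℝ)/2 - 1/2 = -1; norm_num
  have h0 : (0 : ℝ) ∈ Set.Icc ((γ 1).2.1 0 - (γ 1).1.1 0) ((γ 0).2.1 0 - (γ 0).1.1 0) := by
    rw [hA, hB]; constructor <;> norm_num
  obtain ⟨t, ht⟩ := intermediate_value_univ (1 : unitInterval) (0 : unitInterval) hf h0
  obtain ⟨hr, hs, hx2, hy2, -, -, hsep⟩ := hγ t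
  simp only at ht
  rw [norm_sub_eq _ _ hx2 hy2, show (γ t).1.1 0 - (γ t).2.1 0 = 0 by linarith,
    abs_zero] at hsep
  linarith

theorem swissCheese_dim2_two_semidiscs_two_components :
    leftPart.Nonempty ∧ rightPart.Nonempty ∧
    Convex ℝ leftPart ∧ Convex ℝ rightPart ∧
    IsPathConnected leftPart ∧ IsPathConnected rightPart ∧
    leftPart ∩ rightPart = ∅ ∧
    leftPart ∪ rightPart = SC02dim2 ∧
    ¬ IsPathConnected SC02dim2 ∧
    Prod.swap '' leftPart = rightPart ∧ Prod.swap '' rightPart = leftPart :=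
  ⟨left_ne, right_ne, leftPart_convex, rightPart_convex,
    leftPart_convex.isPathConnected left_ne, rightPart_convex.isPathConnected right_ne,
    inter_eq, union_eq, not_path_conn, swap_left, swap_right⟩
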